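/- For j ≥ 2 and ω ≥ 3, the Behrends-Fronsdal generating polynomial Θ^{(j)}(u,w,s) := Σ_{A=0}^{⌊j/2⌋} a_A^{(j)} (uw)^A s^{j-2A} (with a_A^{(j)} given by the recurrence a_0=1, a_A = -(1/2)((j-2A+2)(j-2A+1))/(A(2j-2A+ω-2))·a_{A-1}) satisfies the three-variable polynomial identity Θ^{(j)} = s·P + the correction term: explicitly, Σ_A a_A^{(j-1)}(uw)^A s^{j-2A} - (1/(ω+2(j-2)))·Σ_A 2A·a_A^{(j-1)}(uw)^A s^{j-2A} - (1/(ω+2(j-2)))·Σ_A (j-1-2A)·a_A^{(j-1)} (uw)^{A+1} s^{j-2(A+1)} = Σ_A a_A^{(j)}(uw)^A s^{j-2A}. -/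

import Mathlib

set_option maxHeartbeats 1000000


open Finset

/-- The three-variable polynomial identity behind the Behrends–Fronsdal recursion:
`Σ_A a_A^{(j-1)} (uw)^A s^{j-2A} - (1/(ω+2(j-2))) Σ_A 2A a_A^{(j-1)} (uw)^A s^{j-2A}
 - (1/(ω+2(j-2))) Σ_A (j-1-2A) a_A^{(j-1)} (uw)^{A+1} s^{j-2(A+1)}
 = Σ_A a_A^{(j)} (uw)^A s^{j-2A}`,
where the coefficients `a_A^{(n)} ∈ ℚ` satisfy `a_0^{(n)} = 1`, the recurrence
`a_A^{(n)} = -(1/2)((n-2A+2)(n-2A+1))/(A(2n-2A+ω-2)) a_{A-1}^{(n)}` for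
`1 ≤ A ≤ ⌊n/2⌋`, and vanish otherwise. -/
theorem BF_polynomial_identity {R : Type*} [CommRing R] [Algebra ℚ R]
    (u w s : R) (j ω : ℕ) (hj : 2 ≤ j) (hω : 3 ≤ ω) (a : ℕ → ℕ → ℚ)
    (h0 : ∀ n, a n 0 = 1)
    (hrec : ∀ n A : ℕ, 1 ≤ A → A ≤ n / 2 →
      a n A = -(1 / 2) * (((n : ℚ) - 2 * A + 2) * ((n : ℚ) - 2 * A + 1)) /
        ((A : ℚ) * (2 * (n : ℚ) - 2 * A + (ω : ℚ) - 2)) * a n (A - 1))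
    (hzero : ∀ n A : ℕ, n / 2 < A → a n A = 0) :
    (∑ A ∈ range ((j - 1) / 2 + 1),
        algebraMap ℚ R (a (j - 1) A) * (u * w) ^ A * s ^ (j - 2 * A)) -
      algebraMap ℚ R (1 / ((ω : ℚ) + 2 * ((j : ℚ) - 2))) *
        (∑ A ∈ range ((j - 1) / 2 + 1),
          algebraMap ℚ R (2 * (A : ℚ) * a (j - 1) A) * (u * w) ^ A * s ^ (j - 2 * A)) -
      algebraMap ℚ R (1 / ((ω : ℚ) + 2 * ((j : ℚ) - 2))) *
        (∑ A ∈ range ((j - 1) / 2 + 1),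
          algebraMap ℚ R (((j : ℚ) - 1 - 2 * A) * a (j - 1) A) *
            (u * w) ^ (A + 1) * s ^ (j - 2 * (A + 1))) =
    ∑ A ∈ range (j / 2 + 1),
      algebraMap ℚ R (a j A) * (u * w) ^ A * s ^ (j - 2 * A) := by
  have hj1 : 1 ≤ j := by omega
  have hjq : (2:ℚ) ≤ (j:ℚ) := by exact_mod_cast hj
  have hωq : (3:ℚ) ≤ (ω:ℚ) := by exact_mod_cast hω
  have hjm1 : ((j - 1 : ℕ) : ℚ) = (j:ℚ) - 1 := by
    push_cast [hj1]; ring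
  set c : ℚ := 1 / ((ω : ℚ) + 2 * ((j : ℚ) - 2)) with hc
  have hcden : (ω : ℚ) + 2 * ((j : ℚ) - 2) ≠ 0 := by nlinarith
  -- extended recurrence for `a (j-1)`, valid up to `j/2`
  have brec : ∀ A : ℕ, 1 ≤ A → A ≤ j / 2 →
      a (j-1) A = -(1/2) * (((j:ℚ) - 1 - 2*A + 2) * ((j:ℚ) - 1 - 2*A + 1)) /
        ((A:ℚ) * (2*((j:ℚ)-1) - 2*A + (ω:ℚ) - 2)) * a (j-1) (A-1) := by
    intro A hA1 hA2
    rcases le_or_gt A ((j-1)/2) with h | h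
    · have h' := hrec (j-1) A hA1 h
      rwa [hjm1] at h'
    · have h2A : 2 * A = j := by omega
      have h2Aq : 2 * (A:ℚ) = (j:ℚ) := by exact_mod_cast h2A
      rw [hzero (j-1) A (by omega)]
      have hz : (j:ℚ) - 1 - 2*(A:ℚ) + 1 = 0 := by rw [← h2Aq]; ring
      rw [hz]; ring
  -- the coefficient-level identity
  have key : ∀ A : ℕ, A ≤ j / 2 →
      a j A = a (j-1) A - c * (2*(A:ℚ)) * a (j-1) A -
        (if A = 0 then 0 else c * ((j:ℚ) - 1 - 2*((A-1 : ℕ):ℚ)) * a (j-1) (A-1)) := by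
    intro A
    induction A with
    | zero => intro _; simp [h0]
    | succ B ih =>
      intro hB
      rw [if_neg (Nat.succ_ne_zero B)]
      simp only [Nat.add_sub_cancel]
      rcases Nat.eq_zero_or_pos B with rfl | hB1
      · -- A = 1
        have r1 := hrec j 1 le_rfl (by omega)
        have r2 := brec 1 le_rfl (by omega)
        rw [h0] at r1 r2
        push_cast at r1 r2 ⊢
        rw [r1, r2, h0, hc]
        have n1 : 2*(j:ℚ) - 2 + (ω:ℚ) - 2 ≠ 0 := by nlinarith
        have n2 : 2*((j:ℚ)-1) - 2 + (ω:ℚ) - 2 ≠ 0 := by nlinarith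
        have n1' : 2*((j:ℚ)-1) + (ω:ℚ) - 2 ≠ 0 := by nlinarith
        have n2' : 2*((j:ℚ)-1-1) + (ω:ℚ) - 2 ≠ 0 := by nlinarith
        field_simp
        ring
      · -- A = B + 1, B ≥ 1
        have hB1q : (1:ℚ) ≤ (B:ℚ) := by exact_mod_cast hB1
        have h2B : 2*((B:ℚ)+1) ≤ (j:ℚ) := by
          have : 2*(B+1) ≤ j := by omega
          exact_mod_cast this
        have ihB := ih (by omega)
        rw [if_neg (by omega)] at ihB
        have hBm1 : ((B - 1 : ℕ) : ℚ) = (B:ℚ) - 1 := by push_cast [hB1]; ring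
        rw [hBm1] at ihB
        have r1 := hrec j (B+1) (by omega) hB
        have r2 := brec (B+1) (by omega) hB
        have r3 := brec B hB1 (by omega)
        simp only [Nat.add_sub_cancel] at r1 r2
        push_cast at r1 r2 r3 ⊢
        have n1 : ((B:ℚ)+1) ≠ 0 := by positivity
        have n2 : (B:ℚ) ≠ 0 := by positivity
        have n3 : 2*(j:ℚ) - 2*(B:ℚ) + (ω:ℚ) - 4 ≠ 0 := by nlinarith
        have n4 : 2*(j:ℚ) - 2*(B:ℚ) + (ω:ℚ) - 6 ≠ 0 := by nlinarith
        have hD1 : ((B:ℚ) + 1) * (2 * (j:ℚ) - 2 * ((B:ℚ) + 1) + (ω:ℚ) - 2) ≠ 0 :=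
          mul_ne_zero n1 (fun h => n3 (by linarith))
        have hD2 : ((B:ℚ) + 1) * (2 * ((j:ℚ) - 1) - 2 * ((B:ℚ) + 1) + (ω:ℚ) - 2) ≠ 0 :=
          mul_ne_zero n1 (fun h => n4 (by linarith))
        have hD3 : (B:ℚ) * (2 * ((j:ℚ) - 1) - 2 * (B:ℚ) + (ω:ℚ) - 2) ≠ 0 :=
          mul_ne_zero n2 (fun h => n3 (by linarith))
        rw [div_mul_eq_mul_div, eq_div_iff hD1] at r1
        rw [div_mul_eq_mul_div, eq_div_iff hD2] at r2
        rw [div_mul_eq_mul_div, eq_div_iff hD3] at r3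
        have H5 : c * ((ω:ℚ) + 2*((j:ℚ)-2)) = 1 := by
          rw [hc, one_div, inv_mul_cancel₀ hcden]
        have hfac : (2*((B:ℚ)+1) * (2*(j:ℚ) - 2*(B:ℚ) + (ω:ℚ) - 4)
            * (2*(j:ℚ) - 2*(B:ℚ) + (ω:ℚ) - 6)) ≠ 0 :=
          mul_ne_zero (mul_ne_zero (mul_ne_zero two_ne_zero n1) n3) n4
        refine mul_left_cancel₀ hfac ?_
        linear_combination
          (2*(2*(j:ℚ) + (ω:ℚ) - 2*(B:ℚ) - 6)) * r1
          + (2*(4 - 8*c + 2*(B:ℚ) - 12*(B:ℚ)*c - 4*(B:ℚ)^2*c - (ω:ℚ) + 2*(ω:ℚ)*c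
              + 2*(ω:ℚ)*(B:ℚ)*c - 2*(j:ℚ) + 4*(j:ℚ)*c + 4*(j:ℚ)*(B:ℚ)*c)) * r2
          + (2*(6*c + 14*(B:ℚ)*c + 4*(B:ℚ)^2*c - (ω:ℚ)*c - 2*(ω:ℚ)*(B:ℚ)*c - 8*(j:ℚ)*c
              - 6*(j:ℚ)*(B:ℚ)*c + (j:ℚ)*(ω:ℚ)*c + 2*(j:ℚ)^2*c)) * r3
          + (12*(B:ℚ) + 28*(B:ℚ)^2 + 8*(B:ℚ)^3 - 2*(ω:ℚ)*(B:ℚ) - 4*(ω:ℚ)*(B:ℚ)^2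
              - 6*(j:ℚ) - 30*(j:ℚ)*(B:ℚ) - 16*(j:ℚ)*(B:ℚ)^2 + (j:ℚ)*(ω:ℚ)
              + 4*(j:ℚ)*(ω:ℚ)*(B:ℚ) + 8*(j:ℚ)^2 + 10*(j:ℚ)^2*(B:ℚ)
              - (j:ℚ)^2*(ω:ℚ) - 2*(j:ℚ)^3) * ihB
          + ((8 + 16*(B:ℚ) - 2*(ω:ℚ) - 4*(ω:ℚ)*(B:ℚ) - 10*(j:ℚ) - 4*(j:ℚ)*(B:ℚ)
              + 2*(j:ℚ)*(ω:ℚ) + 2*(j:ℚ)^2) * a (j-1) B) * H5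
  -- now the sums
  have hmM : (j-1)/2 ≤ j/2 := by omega
  have hS1 : ∑ A ∈ range ((j-1)/2+1), algebraMap ℚ R (a (j-1) A) * (u*w)^A * s^(j-2*A)
      = ∑ A ∈ range (j/2+1), algebraMap ℚ R (a (j-1) A) * (u*w)^A * s^(j-2*A) := by
    apply Finset.sum_subset (Finset.range_subset_range.mpr (by omega))
    intro A hA hA'
    simp only [mem_range] at hA hA'
    rw [hzero (j-1) A (by omega)]
    simp
  have hS2 : ∑ A ∈ range ((j-1)/2+1),
        algebraMap ℚ R (2*(A:ℚ) * a (j-1) A) * (u*w)^A * s^(j-2*A)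
      = ∑ A ∈ range (j/2+1),
        algebraMap ℚ R (2*(A:ℚ) * a (j-1) A) * (u*w)^A * s^(j-2*A) := by
    apply Finset.sum_subset (Finset.range_subset_range.mpr (by omega))
    intro A hA hA'
    simp only [mem_range] at hA hA'
    rw [hzero (j-1) A (by omega)]
    simp
  have hS3 : ∑ A ∈ range ((j-1)/2+1),
        algebraMap ℚ R (((j:ℚ)-1-2*(A:ℚ)) * a (j-1) A) * (u*w)^(A+1) * s^(j-2*(A+1))
      = ∑ A ∈ range (j/2+1),
        (if A = 0 then 0 else
          algebraMap ℚ R (((j:ℚ)-1-2*((A-1:ℕ):ℚ)) * a (j-1) (A-1)) * (u*w)^A * s^(j-2*A)) := by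
    have e1 : ∑ A ∈ range ((j-1)/2+1+1),
        (if A = 0 then (0:R) else
          algebraMap ℚ R (((j:ℚ)-1-2*((A-1:ℕ):ℚ)) * a (j-1) (A-1)) * (u*w)^A * s^(j-2*A))
        = ∑ A ∈ range ((j-1)/2+1),
          algebraMap ℚ R (((j:ℚ)-1-2*(A:ℚ)) * a (j-1) A) * (u*w)^(A+1) * s^(j-2*(A+1)) := by
      rw [Finset.sum_range_succ']
      simp
    rw [← e1]
    symm
    apply Finset.sum_subset (Finset.range_subset_range.mpr (by omega))
    intro A hA hA'
    simp only [mem_range] at hA hA'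
    have hA1 : A = (j-1)/2 + 1 := by omega
    have hjodd : j = 2*((j-1)/2) + 1 := by omega
    rw [if_neg (by omega)]
    have e2 : ((A-1:ℕ):ℚ) = (((j-1)/2 : ℕ):ℚ) := by rw [hA1]; simp
    have e3 : (j:ℚ) = 2*(((j-1)/2 : ℕ):ℚ) + 1 := by exact_mod_cast hjodd
    have e4 : ((j:ℚ)-1-2*((A-1:ℕ):ℚ)) = 0 := by rw [e2, e3]; ring
    rw [e4, zero_mul]
    simp
  rw [hS1, hS2, hS3, Finset.mul_sum, Finset.mul_sum, ← Finset.sum_sub_distrib,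
    ← Finset.sum_sub_distrib]
  apply Finset.sum_congr rfl
  intro A hA
  simp only [mem_range] at hA
  rw [key A (by omega)]
  rcases Nat.eq_zero_or_pos A with rfl | hA1
  · simp [h0]
  · rw [if_neg (by omega), if_neg (by omega)]
    simp only [map_sub, map_mul]
    ring
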